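/- Let C_{p,q,r} be the type-III bicyclic graph with q > p > r ≥ 1 and q − r = 2 (so q − p = p − r = 1). Then W = {v_1, v_{p+2}} is a resolving set and β(C_{p,q,r}) = 2. -/
import Mathlib

/-- `W` is a resolving set for `G`: distinct vertices have distinct
distance vectors to the elements of `W`. -/
def IsResolving {V : Type*} (G : SimpleGraph V) (W : Set V) : Prop :=
  ∀ u v : V, (∀ w ∈ W, G.dist u w = G.dist v w) → u = v

/-- The metric dimension of `G`: the minimum cardinality of a resolving set. -/
noncomputable def metricDim {V : Type*} [Fintype V] (G : SimpleGraph V) : ℕ :=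
  sInf {n | ∃ W : Finset V, IsResolving G (↑W) ∧ W.card = n}

/-- The type-III base bicyclic graph `C_{p,q,r}` on vertices `v_1, …, v_{p+q+r}`
(vertex `v_i` is index `i-1`): three paths on `p`, `q`, `r` vertices, with the
extra edges `v_{p+1}v_1`, `v_{p+1}v_{p+q+1}`, `v_{p+q}v_p`, `v_{p+q}v_{p+q+r}`.
Note `C_{p,q,r} ≅ Θ_{p+1,q-1,r+1}`. -/
def bicyclicIII (p q r : ℕ) : SimpleGraph (Fin (p + q + r)) :=
  SimpleGraph.fromRel (fun a b =>
    (a.val + 1 = b.val ∧ (b.val < p ∨ (p ≤ a.val ∧ b.val < p + q) ∨ p + q ≤ a.val))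
    ∨ (a.val = p ∧ b.val = 0)
    ∨ (a.val = p ∧ b.val = p + q)
    ∨ (a.val = p + q - 1 ∧ b.val = p - 1)
    ∨ (a.val = p + q - 1 ∧ b.val = p + q + r - 1))

section Aux

private lemma dist_le_of_descent {V : Type*} {G : SimpleGraph V} {w : V} {f : V → ℕ}
    (h0 : ∀ v, f v = 0 → v = w)
    (hd : ∀ v, f v ≠ 0 → ∃ u, G.Adj v u ∧ f u + 1 = f v) :
    ∀ v, G.dist v w ≤ f v ∧ G.Reachable v w := by
  suffices H : ∀ n v, f v = n → G.dist v w ≤ f v ∧ G.Reachable v w by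
    exact fun v => H (f v) v rfl
  intro n
  induction n using Nat.strong_induction_on with
  | _ n ih =>
    intro v hv
    rcases Nat.eq_zero_or_pos n with h | h
    · have hvw : v = w := h0 v (by omega)
      subst hvw
      exact ⟨by simp [SimpleGraph.dist_self], SimpleGraph.Reachable.refl v⟩
    · obtain ⟨u, hadj, hu⟩ := hd v (by omega)
      obtain ⟨h1, h2⟩ := ih (f u) (by omega) u rfl
      obtain ⟨p, hp⟩ := h2.exists_walk_length_eq_dist
      refine ⟨?_, (hadj.reachable).trans h2⟩
      have := SimpleGraph.dist_le (SimpleGraph.Walk.cons hadj p)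
      simp only [SimpleGraph.Walk.length_cons] at this
      omega

private lemma le_dist_of_lipschitz {V : Type*} {G : SimpleGraph V} {w : V} {f : V → ℕ}
    (hw : f w = 0) (hl : ∀ a b, G.Adj a b → f a ≤ f b + 1) :
    ∀ {v}, G.Reachable v w → f v ≤ G.dist v w := by
  have key : ∀ {v} (p : G.Walk v w), f v ≤ p.length := by
    intro v p
    induction p with
    | nil => simp [hw]
    | cons h q ih =>
      have := hl _ _ h
      simp only [SimpleGraph.Walk.length_cons]
      omega
  intro v hr
  obtain ⟨p, hp⟩ := hr.exists_walk_length_eq_dist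
  rw [← hp]
  exact key p

private lemma dist_eq_of_descent_lipschitz {V : Type*} {G : SimpleGraph V} {w : V} {f : V → ℕ}
    (hw : f w = 0)
    (h0 : ∀ v, f v = 0 → v = w)
    (hd : ∀ v, f v ≠ 0 → ∃ u, G.Adj v u ∧ f u + 1 = f v)
    (hl : ∀ a b, G.Adj a b → f a ≤ f b + 1) (v : V) :
    G.dist v w = f v := by
  obtain ⟨h1, h2⟩ := dist_le_of_descent h0 hd v
  exact le_antisymm h1 (le_dist_of_lipschitz hw hl h2)

end Aux

section Specific

variable (r : ℕ)

private def f0 (v : Fin (r + 1 + (r + 2) + r)) : ℕ :=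
  if v.val ≤ r then v.val
  else if v.val ≤ 2 * r + 2 then min (v.val - r) (3 * r + 3 - v.val)
  else v.val - (2 * r + 1)

private def f1 (v : Fin (r + 1 + (r + 2) + r)) : ℕ :=
  if v.val ≤ r then min (v.val + 2) (2 * r + 1 - v.val)
  else if v.val ≤ 2 * r + 2 then max v.val (r + 2) - min v.val (r + 2)
  else v.val - (2 * r + 1)

private lemma adj_succ {i j : ℕ} (hi : i < r + 1 + (r + 2) + r) (hj : j < r + 1 + (r + 2) + r)
    (h1 : i + 1 = j)
    (h2 : j < r + 1 ∨ (r + 1 ≤ i ∧ j < 2 * r + 3) ∨ 2 * r + 3 ≤ i) :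
    (bicyclicIII (r + 1) (r + 2) r).Adj ⟨i, hi⟩ ⟨j, hj⟩ := by
  simp only [bicyclicIII, SimpleGraph.fromRel_adj, Ne, Fin.ext_iff, Fin.val_mk]
  exact ⟨by omega, Or.inl (by omega)⟩

private lemma adj_p0 {i j : ℕ} (hi : i < r + 1 + (r + 2) + r) (hj : j < r + 1 + (r + 2) + r)
    (h1 : i = r + 1) (h2 : j = 0) :
    (bicyclicIII (r + 1) (r + 2) r).Adj ⟨i, hi⟩ ⟨j, hj⟩ := by
  simp only [bicyclicIII, SimpleGraph.fromRel_adj, Ne, Fin.ext_iff, Fin.val_mk]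
  exact ⟨by omega, Or.inl (by omega)⟩

private lemma adj_ppq {i j : ℕ} (hi : i < r + 1 + (r + 2) + r) (hj : j < r + 1 + (r + 2) + r)
    (h1 : i = r + 1) (h2 : j = 2 * r + 3) :
    (bicyclicIII (r + 1) (r + 2) r).Adj ⟨i, hi⟩ ⟨j, hj⟩ := by
  simp only [bicyclicIII, SimpleGraph.fromRel_adj, Ne, Fin.ext_iff, Fin.val_mk]
  exact ⟨by omega, Or.inl (by omega)⟩

private lemma adj_qp {i j : ℕ} (hi : i < r + 1 + (r + 2) + r) (hj : j < r + 1 + (r + 2) + r)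
    (h1 : i = 2 * r + 2) (h2 : j = r) :
    (bicyclicIII (r + 1) (r + 2) r).Adj ⟨i, hi⟩ ⟨j, hj⟩ := by
  simp only [bicyclicIII, SimpleGraph.fromRel_adj, Ne, Fin.ext_iff, Fin.val_mk]
  exact ⟨by omega, Or.inl (by omega)⟩

private lemma adj_qn (hr : 1 ≤ r) {i j : ℕ} (hi : i < r + 1 + (r + 2) + r) (hj : j < r + 1 + (r + 2) + r)
    (h1 : i = 2 * r + 2) (h2 : j = 3 * r + 2) :
    (bicyclicIII (r + 1) (r + 2) r).Adj ⟨i, hi⟩ ⟨j, hj⟩ := by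
  simp only [bicyclicIII, SimpleGraph.fromRel_adj, Ne, Fin.ext_iff, Fin.val_mk]
  exact ⟨by omega, Or.inl (by omega)⟩

private lemma lip0 (hr : 1 ≤ r) : ∀ a b, (bicyclicIII (r + 1) (r + 2) r).Adj a b →
    f0 r a ≤ f0 r b + 1 := by
  intro a b hab
  simp only [bicyclicIII, SimpleGraph.fromRel_adj, Ne, Fin.ext_iff, Fin.val_mk] at hab
  simp only [f0, Fin.val_mk]
  obtain ⟨hne, (h|h|h|h|h)|(h|h|h|h|h)⟩ := hab <;> (split_ifs <;> omega)

private lemma lip1 (hr : 1 ≤ r) : ∀ a b, (bicyclicIII (r + 1) (r + 2) r).Adj a b →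
    f1 r a ≤ f1 r b + 1 := by
  intro a b hab
  simp only [bicyclicIII, SimpleGraph.fromRel_adj, Ne, Fin.ext_iff, Fin.val_mk] at hab
  simp only [f1, Fin.val_mk]
  obtain ⟨hne, (h|h|h|h|h)|(h|h|h|h|h)⟩ := hab <;> (split_ifs <;> omega)

private lemma descent0 (hr : 1 ≤ r) : ∀ v, f0 r v ≠ 0 →
    ∃ u, (bicyclicIII (r + 1) (r + 2) r).Adj v u ∧ f0 r u + 1 = f0 r v := by
  rintro ⟨i, hi⟩ hv
  simp only [f0, Fin.val_mk] at hv
  by_cases h1 : i ≤ r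
  · -- region A, i ≥ 1
    have hi1 : 1 ≤ i := by split_ifs at hv <;> omega
    exact ⟨⟨i - 1, by omega⟩, (adj_succ r _ _ (by omega) (by omega)).symm,
      by simp only [f0, Fin.val_mk]; split_ifs <;> omega⟩
  · by_cases h2 : i = r + 1
    · exact ⟨⟨0, by omega⟩, adj_p0 r _ _ h2 rfl,
        by simp only [f0, Fin.val_mk]; split_ifs <;> omega⟩
    · by_cases h3 : i ≤ 2 * r + 1
      · exact ⟨⟨i - 1, by omega⟩, (adj_succ r _ _ (by omega) (by omega)).symm,
          by simp only [f0, Fin.val_mk]; split_ifs <;> omega⟩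
      · by_cases h4 : i = 2 * r + 2
        · exact ⟨⟨r, by omega⟩, adj_qp r _ _ h4 rfl,
            by simp only [f0, Fin.val_mk]; split_ifs <;> omega⟩
        · by_cases h5 : i = 2 * r + 3
          · exact ⟨⟨r + 1, by omega⟩, (adj_ppq r _ _ rfl h5).symm,
              by simp only [f0, Fin.val_mk]; split_ifs <;> omega⟩
          · exact ⟨⟨i - 1, by omega⟩, (adj_succ r _ _ (by omega) (by omega)).symm,
              by simp only [f0, Fin.val_mk]; split_ifs <;> omega⟩

private lemma descent1 (hr : 1 ≤ r) : ∀ v, f1 r v ≠ 0 →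
    ∃ u, (bicyclicIII (r + 1) (r + 2) r).Adj v u ∧ f1 r u + 1 = f1 r v := by
  rintro ⟨i, hi⟩ hv
  simp only [f1, Fin.val_mk] at hv
  by_cases h1 : i = 0
  · exact ⟨⟨r + 1, by omega⟩, (adj_p0 r _ _ rfl h1).symm,
      by simp only [f1, Fin.val_mk]; split_ifs <;> omega⟩
  · by_cases h2 : i ≤ r - 1
    · exact ⟨⟨i - 1, by omega⟩, (adj_succ r _ _ (by omega) (by omega)).symm,
        by simp only [f1, Fin.val_mk]; split_ifs <;> omega⟩
    · by_cases h3 : i = r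
      · exact ⟨⟨2 * r + 2, by omega⟩, (adj_qp r _ _ rfl h3).symm,
          by simp only [f1, Fin.val_mk]; split_ifs <;> omega⟩
      · by_cases h4 : i = r + 1
        · exact ⟨⟨r + 2, by omega⟩, adj_succ r _ _ (by omega) (by omega),
            by simp only [f1, Fin.val_mk]; split_ifs <;> omega⟩
        · by_cases h5 : i ≤ 2 * r + 2
          · -- region B, r+3 ≤ i ≤ 2r+2 (i = r+2 excluded since f1 = 0)
            have hne : i ≠ r + 2 := by
              intro h; subst h; simp only [if_neg (by omega : ¬ (r + 2 ≤ r)),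
                if_pos (by omega : r + 2 ≤ 2 * r + 2)] at hv; omega
            exact ⟨⟨i - 1, by omega⟩, (adj_succ r _ _ (by omega) (by omega)).symm,
              by simp only [f1, Fin.val_mk]; split_ifs <;> omega⟩
          · by_cases h6 : i = 2 * r + 3
            · exact ⟨⟨r + 1, by omega⟩, (adj_ppq r _ _ rfl h6).symm,
                by simp only [f1, Fin.val_mk]; split_ifs <;> omega⟩
            · exact ⟨⟨i - 1, by omega⟩, (adj_succ r _ _ (by omega) (by omega)).symm,
                by simp only [f1, Fin.val_mk]; split_ifs <;> omega⟩

private lemma dist0 (hr : 1 ≤ r) (v : Fin (r + 1 + (r + 2) + r))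
    (w : Fin (r + 1 + (r + 2) + r)) (hw : w.val = 0) :
    (bicyclicIII (r + 1) (r + 2) r).dist v w = f0 r v := by
  apply dist_eq_of_descent_lipschitz
  · simp only [f0, Fin.val_mk]; split_ifs <;> omega
  · rintro ⟨i, hi⟩ h
    simp only [f0, Fin.val_mk] at h
    have : i = 0 := by split_ifs at h <;> omega
    exact Fin.ext (by simp only [Fin.val_mk]; omega)
  · exact descent0 r hr
  · exact lip0 r hr

private lemma dist1 (hr : 1 ≤ r) (v : Fin (r + 1 + (r + 2) + r))
    (w : Fin (r + 1 + (r + 2) + r)) (hw : w.val = r + 2) :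
    (bicyclicIII (r + 1) (r + 2) r).dist v w = f1 r v := by
  apply dist_eq_of_descent_lipschitz
  · simp only [f1, Fin.val_mk]; split_ifs <;> omega
  · rintro ⟨i, hi⟩ h
    simp only [f1, Fin.val_mk] at h
    have : i = r + 2 := by split_ifs at h <;> omega
    exact Fin.ext (by simp only [Fin.val_mk]; omega)
  · exact descent1 r hr
  · exact lip1 r hr

private lemma two_neighbors (hr : 1 ≤ r) (w : Fin (r + 1 + (r + 2) + r)) :
    ∃ a b : Fin (r + 1 + (r + 2) + r), a ≠ b ∧
      (bicyclicIII (r + 1) (r + 2) r).Adj w a ∧ (bicyclicIII (r + 1) (r + 2) r).Adj w b := by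
  obtain ⟨i, hi⟩ := w
  by_cases h1 : i = 0
  · exact ⟨⟨1, by omega⟩, ⟨r + 1, by omega⟩, by simp only [Ne, Fin.mk.injEq]; omega,
      adj_succ r _ _ (by omega) (by omega), (adj_p0 r _ _ rfl h1).symm⟩
  · by_cases h2 : i ≤ r - 1
    · exact ⟨⟨i - 1, by omega⟩, ⟨i + 1, by omega⟩, by simp only [Ne, Fin.mk.injEq]; omega,
        (adj_succ r _ _ (by omega) (by omega)).symm, adj_succ r _ _ (by omega) (by omega)⟩
    · by_cases h3 : i = r
      · exact ⟨⟨r - 1, by omega⟩, ⟨2 * r + 2, by omega⟩, by simp only [Ne, Fin.mk.injEq]; omega,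
          (adj_succ r _ _ (by omega) (by omega)).symm, (adj_qp r _ _ rfl h3).symm⟩
      · by_cases h4 : i = r + 1
        · exact ⟨⟨0, by omega⟩, ⟨r + 2, by omega⟩, by simp only [Ne, Fin.mk.injEq]; omega,
            adj_p0 r _ _ h4 rfl, adj_succ r _ _ (by omega) (by omega)⟩
        · by_cases h5 : i ≤ 2 * r + 1
          · exact ⟨⟨i - 1, by omega⟩, ⟨i + 1, by omega⟩, by simp only [Ne, Fin.mk.injEq]; omega,
              (adj_succ r _ _ (by omega) (by omega)).symm, adj_succ r _ _ (by omega) (by omega)⟩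
          · by_cases h6 : i = 2 * r + 2
            · exact ⟨⟨2 * r + 1, by omega⟩, ⟨r, by omega⟩, by simp only [Ne, Fin.mk.injEq]; omega,
                (adj_succ r _ _ (by omega) (by omega)).symm, adj_qp r _ _ h6 rfl⟩
            · by_cases h7 : i = 3 * r + 2
              · by_cases h8 : i = 2 * r + 3
                · exact ⟨⟨2 * r + 2, by omega⟩, ⟨r + 1, by omega⟩, by simp only [Ne, Fin.mk.injEq]; omega,
                    (adj_qn r hr _ _ rfl h7).symm, (adj_ppq r _ _ rfl h8).symm⟩
                · exact ⟨⟨2 * r + 2, by omega⟩, ⟨i - 1, by omega⟩, by simp only [Ne, Fin.mk.injEq]; omega,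
                    (adj_qn r hr _ _ rfl h7).symm, (adj_succ r _ _ (by omega) (by omega)).symm⟩
              · by_cases h8 : i = 2 * r + 3
                · exact ⟨⟨r + 1, by omega⟩, ⟨i + 1, by omega⟩, by simp only [Ne, Fin.mk.injEq]; omega,
                    (adj_ppq r _ _ rfl h8).symm, adj_succ r _ _ (by omega) (by omega)⟩
                · exact ⟨⟨i - 1, by omega⟩, ⟨i + 1, by omega⟩, by simp only [Ne, Fin.mk.injEq]; omega,
                    (adj_succ r _ _ (by omega) (by omega)).symm, adj_succ r _ _ (by omega) (by omega)⟩

private lemma resolving_injective (hr : 1 ≤ r) (u v : Fin (r + 1 + (r + 2) + r))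
    (h0 : f0 r u = f0 r v) (h1 : f1 r u = f1 r v) : u = v := by
  obtain ⟨i, hi⟩ := u
  obtain ⟨j, hj⟩ := v
  apply Fin.ext
  simp only [f0, f1, Fin.val_mk] at h0 h1 ⊢
  split_ifs at h0 h1 <;> omega

end Specific

theorem bicyclicIII_q_gt_p_gt_r_diff_two (p q r : ℕ)
    (hr : 1 ≤ r) (hpr : r < p) (hpq : p < q) (hq : q = r + 2) :
    IsResolving (bicyclicIII p q r)
      {(⟨0, by omega⟩ : Fin (p + q + r)), ⟨p + 1, by omega⟩}
    ∧ metricDim (bicyclicIII p q r) = 2 := by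
  have hp : p = r + 1 := by omega
  subst hq hp
  have hres : IsResolving (bicyclicIII (r + 1) (r + 2) r)
      {(⟨0, by omega⟩ : Fin (r + 1 + (r + 2) + r)), ⟨r + 1 + 1, by omega⟩} := by
    intro u v h
    have e0 := h ⟨0, by omega⟩ (Set.mem_insert _ _)
    have e1 := h ⟨r + 1 + 1, by omega⟩ (Set.mem_insert_of_mem _ rfl)
    rw [dist0 r hr u _ (by simp only [Fin.val_mk]), dist0 r hr v _ (by simp only [Fin.val_mk])] at e0
    rw [dist1 r hr u _ (by simp only [Fin.val_mk]), dist1 r hr v _ (by simp only [Fin.val_mk])] at e1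
    exact resolving_injective r hr u v e0 e1
  refine ⟨hres, ?_⟩
  have hmem : 2 ∈ {n | ∃ W : Finset (Fin (r + 1 + (r + 2) + r)),
      IsResolving (bicyclicIII (r + 1) (r + 2) r) (↑W) ∧ W.card = n} := by
    refine ⟨{⟨0, by omega⟩, ⟨r + 1 + 1, by omega⟩}, ?_, ?_⟩
    · simpa using hres
    · rw [Finset.card_pair (by simp [Fin.ext_iff])]
  apply le_antisymm
  · exact Nat.sInf_le hmem
  · apply le_csInf ⟨2, hmem⟩
    rintro m ⟨W, hW, rfl⟩
    by_contra hm
    push_neg at hm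
    interval_cases h : W.card
    · rw [Finset.card_eq_zero] at h
      subst h
      have := hW ⟨0, by omega⟩ ⟨1, by omega⟩ (by simp)
      simp [Fin.ext_iff] at this
    · rw [Finset.card_eq_one] at h
      obtain ⟨w, rfl⟩ := h
      obtain ⟨a, b, hab, hwa, hwb⟩ := two_neighbors r hr w
      refine hab (hW a b ?_)
      intro x hx
      simp only [Finset.coe_singleton, Set.mem_singleton_iff] at hx
      subst hx
      rw [SimpleGraph.dist_eq_one_iff_adj.mpr hwa.symm,
        SimpleGraph.dist_eq_one_iff_adj.mpr hwb.symm]
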